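/- For every density matrix ρ on ℂ^d, M_Re(ρ) ≤ (1/2)·M_{T,1/2}(ρ), and equality holds if and only if ρ = ρ*, i.e. if and only if ρ is real. -/

import Mathlib

open Matrix Complex ComplexOrder Classical

/-- The positive semidefinite square root of a matrix (junk value `0` if not PSD). -/
noncomputable def psqrt {n : Type*} [Fintype n] [DecidableEq n] (A : Matrix n n ℂ) :
    Matrix n n ℂ :=
  if h : A.PosSemidef then
    h.1.eigenvectorUnitary.1 * diagonal ((↑) ∘ Real.sqrt ∘ h.1.eigenvalues) *
      (star h.1.eigenvectorUnitary : Matrix n n ℂ)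
  else 0

/-- Entrywise complex conjugate of a matrix. -/
def mconj {m n : Type*} (A : Matrix m n ℂ) : Matrix m n ℂ := A.map (starRingEnd ℂ)

/-- Fidelity `F(ρ,σ) = Tr √(√ρ σ √ρ)`. -/
noncomputable def fidelity {n : Type*} [Fintype n] [DecidableEq n] (ρ σ : Matrix n n ℂ) : ℝ :=
  ((psqrt (psqrt ρ * σ * psqrt ρ)).trace).re

/-- The real part state `Re(ρ) = (ρ + ρ*)/2`. -/
noncomputable def reState {n : Type*} (ρ : Matrix n n ℂ) : Matrix n n ℂ :=
  ((1 : ℂ)/2) • (ρ + mconj ρ)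

/-- The imaginarity measure `M_Re(ρ) = 1 - F(ρ, Re(ρ))`. -/
noncomputable def MRe {n : Type*} [Fintype n] [DecidableEq n] (ρ : Matrix n n ℂ) : ℝ :=
  1 - fidelity ρ (reState ρ)

/-- A density matrix: positive semidefinite with trace 1. -/
def IsDensityMatrix {n : Type*} [Fintype n] (ρ : Matrix n n ℂ) : Prop :=
  ρ.PosSemidef ∧ ρ.trace = 1

/-- The quantum affinity `A(ρ,σ) = Tr(√ρ √σ)`. -/
noncomputable def affinity {n : Type*} [Fintype n] [DecidableEq n] (ρ σ : Matrix n n ℂ) : ℝ :=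
  ((psqrt ρ * psqrt σ).trace).re

/-- The Tsallis relative entropy imaginarity of order 1/2: `M_{T,1/2}(ρ) = 1 - A(ρ, ρ*)`. -/
noncomputable def MT {n : Type*} [Fintype n] [DecidableEq n] (ρ : Matrix n n ℂ) : ℝ :=
  1 - affinity ρ (mconj ρ)

namespace MyCfc

variable {d : ℕ} {A : Matrix (Fin d) (Fin d) ℂ}


lemma star_mul_self_u (hA : A.IsHermitian) :
    star (IsHermitian.eigenvectorUnitary hA : Matrix (Fin d) (Fin d) ℂ) *
      (IsHermitian.eigenvectorUnitary hA : Matrix (Fin d) (Fin d) ℂ) = 1 :=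
  Matrix.mem_unitaryGroup_iff'.mp (IsHermitian.eigenvectorUnitary hA).2

lemma mul_star_self_u (hA : A.IsHermitian) :
    (IsHermitian.eigenvectorUnitary hA : Matrix (Fin d) (Fin d) ℂ) *
      star (IsHermitian.eigenvectorUnitary hA : Matrix (Fin d) (Fin d) ℂ) = 1 :=
  Matrix.mem_unitaryGroup_iff.mp (IsHermitian.eigenvectorUnitary hA).2

lemma cfc_mul (hA : A.IsHermitian) (f g : ℝ → ℝ) :
    hA.cfc f * hA.cfc g = hA.cfc (fun x => f x * g x) := by
  simp only [Matrix.IsHermitian.cfc, Unitary.conjStarAlgAut_apply, Unitary.coe_star, mul_assoc]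
  rw [← mul_assoc (star _) (IsHermitian.eigenvectorUnitary hA : Matrix (Fin d) (Fin d) ℂ),
    star_mul_self_u hA, one_mul, ← mul_assoc (diagonal _), diagonal_mul_diagonal]
  have : (fun i => (RCLike.ofReal ∘ f ∘ hA.eigenvalues) i * (RCLike.ofReal ∘ g ∘ hA.eigenvalues) i)
      = (RCLike.ofReal ∘ (fun x => f x * g x) ∘ hA.eigenvalues : Fin d → ℂ) := by
    funext i; simp [Function.comp]
  rw [this]

lemma cfc_congr (hA : A.IsHermitian) {f g : ℝ → ℝ}
    (h : ∀ i, f (hA.eigenvalues i) = g (hA.eigenvalues i)) : hA.cfc f = hA.cfc g := by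
  simp only [Matrix.IsHermitian.cfc]
  have : (RCLike.ofReal ∘ f ∘ hA.eigenvalues : Fin d → ℂ)
      = (RCLike.ofReal ∘ g ∘ hA.eigenvalues) := by
    funext i; simp [Function.comp, h i]
  rw [this]

lemma cfc_one (hA : A.IsHermitian) : hA.cfc (fun _ => 1) = 1 := by
  simp only [Matrix.IsHermitian.cfc, Unitary.conjStarAlgAut_apply, Unitary.coe_star]
  have : diagonal (RCLike.ofReal ∘ (fun _ : ℝ => (1:ℝ)) ∘ hA.eigenvalues)
      = (1 : Matrix (Fin d) (Fin d) ℂ) := by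
    simp [Function.comp_def]
  rw [this, mul_one, mul_star_self_u hA]

lemma cfc_id (hA : A.IsHermitian) : hA.cfc (fun x => x) = A := by
  simp only [Matrix.IsHermitian.cfc]
  exact hA.spectral_theorem.symm

lemma cfc_conjTranspose (hA : A.IsHermitian) (f : ℝ → ℝ) :
    (hA.cfc f)ᴴ = hA.cfc f := by
  rw [← Matrix.star_eq_conjTranspose]
  simp only [Matrix.IsHermitian.cfc, Unitary.conjStarAlgAut_apply, Unitary.coe_star,
    StarMul.star_mul, star_star, mul_assoc]
  congr 1
  congr 1
  rw [Matrix.star_eq_conjTranspose, diagonal_conjTranspose]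
  exact congrArg diagonal (funext fun i => by simp [Function.comp, RCLike.star_def])

lemma cfc_isHermitian (hA : A.IsHermitian) (f : ℝ → ℝ) : (hA.cfc f).IsHermitian :=
  cfc_conjTranspose hA f

lemma cfc_posSemidef (hA : A.IsHermitian) {f : ℝ → ℝ}
    (h : ∀ i, 0 ≤ f (hA.eigenvalues i)) : (hA.cfc f).PosSemidef := by
  have hd : (diagonal (RCLike.ofReal ∘ f ∘ hA.eigenvalues : Fin d → ℂ)).PosSemidef := by
    refine PosSemidef.diagonal fun i => ?_
    simpa [Function.comp] using Complex.zero_le_real.mpr (h i)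
  have := hd.mul_mul_conjTranspose_same (IsHermitian.eigenvectorUnitary hA :
    Matrix (Fin d) (Fin d) ℂ)
  rw [← Matrix.star_eq_conjTranspose] at this
  exact this

lemma cfc_trace (hA : A.IsHermitian) (f : ℝ → ℝ) :
    (hA.cfc f).trace = ∑ i, (f (hA.eigenvalues i) : ℂ) := by
  simp only [Matrix.IsHermitian.cfc, Unitary.conjStarAlgAut_apply, Unitary.coe_star]
  rw [trace_mul_cycle, star_mul_self_u hA, one_mul, trace_diagonal]
  simp [Function.comp]

lemma cfc_trace_re (hA : A.IsHermitian) (f : ℝ → ℝ) :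
    (hA.cfc f).trace.re = ∑ i, f (hA.eigenvalues i) := by
  rw [cfc_trace]
  rw [← Complex.ofReal_sum]
  exact Complex.ofReal_re _

lemma cfc_sub (hA : A.IsHermitian) (f g : ℝ → ℝ) :
    hA.cfc f - hA.cfc g = hA.cfc (fun x => f x - g x) := by
  simp only [Matrix.IsHermitian.cfc, Unitary.conjStarAlgAut_apply, Unitary.coe_star]
  rw [← sub_mul, ← mul_sub, diagonal_sub]
  have : (fun i => (RCLike.ofReal ∘ f ∘ hA.eigenvalues : Fin d → ℂ) i
      - (RCLike.ofReal ∘ g ∘ hA.eigenvalues : Fin d → ℂ) i)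
      = (RCLike.ofReal ∘ (fun x => f x - g x) ∘ hA.eigenvalues : Fin d → ℂ) := by
    funext i; simp [Function.comp]
  rw [this]

lemma cfc_const (hA : A.IsHermitian) (c : ℝ) :
    hA.cfc (fun _ => c) = (c : ℂ) • (1 : Matrix (Fin d) (Fin d) ℂ) := by
  simp only [Matrix.IsHermitian.cfc, Unitary.conjStarAlgAut_apply, Unitary.coe_star]
  rw [show (RCLike.ofReal ∘ (fun _ : ℝ => c) ∘ hA.eigenvalues : Fin d → ℂ)
      = fun _ => (c:ℂ) from rfl, ← smul_one_eq_diagonal, mul_smul_comm, smul_mul_assoc,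
    mul_one, mul_star_self_u hA]

lemma psqrt_eq {M : Matrix (Fin d) (Fin d) ℂ} (hM : M.PosSemidef) :
    psqrt M = hM.1.cfc Real.sqrt := by
  rw [psqrt, dif_pos hM]
  rfl

lemma psqrt_psd {M : Matrix (Fin d) (Fin d) ℂ} (hM : M.PosSemidef) : (psqrt M).PosSemidef := by
  rw [psqrt_eq hM]
  exact cfc_posSemidef hM.1 fun i => Real.sqrt_nonneg _

lemma psqrt_mul_self {M : Matrix (Fin d) (Fin d) ℂ} (hM : M.PosSemidef) :
    psqrt M * psqrt M = M := by
  rw [psqrt_eq hM, cfc_mul, cfc_congr hM.1 (g := fun x => x)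
    fun i => Real.mul_self_sqrt (hM.eigenvalues_nonneg i), cfc_id]

lemma psqrt_of_mul_self {M : Matrix (Fin d) (Fin d) ℂ} (hM : M.PosSemidef)
    (hMM : (M * M).PosSemidef) : psqrt (M * M) = M := by
  have hsa : IsSelfAdjoint M := hM.1.isSelfAdjoint
  have e : M * M = cfc (fun x : ℝ => x * x) M := by
    rw [_root_.cfc_mul (fun x : ℝ => x) (fun x => x) M, cfc_id' ℝ M hsa]
  rw [psqrt_eq hMM, ← IsHermitian.cfc_eq hMM.1]
  rw [e, ← cfc_comp' Real.sqrt (fun x : ℝ => x * x) M (ha := hsa), IsHermitian.cfc_eq hM.1,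
    cfc_congr hM.1 (g := fun x => x)
      fun i => Real.sqrt_mul_self (hM.eigenvalues_nonneg i), cfc_id]

lemma trace_herm_sq (B : Matrix (Fin d) (Fin d) ℂ) :
    (Bᴴ * B).trace = ((∑ i, ∑ j, Complex.normSq (B j i) : ℝ) : ℂ) := by
  push_cast
  simp only [Matrix.trace, Matrix.diag, mul_apply, conjTranspose_apply, Complex.star_def,
    ← Complex.normSq_eq_conj_mul_self]

lemma trace_herm_sq_re_nonneg (B : Matrix (Fin d) (Fin d) ℂ) : 0 ≤ (Bᴴ * B).trace.re := by
  rw [trace_herm_sq, Complex.ofReal_re]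
  exact Finset.sum_nonneg fun i _ => Finset.sum_nonneg fun j _ => Complex.normSq_nonneg _

lemma eq_zero_of_trace_herm_sq (B : Matrix (Fin d) (Fin d) ℂ)
    (h : (Bᴴ * B).trace.re = 0) : B = 0 := by
  rw [trace_herm_sq, Complex.ofReal_re] at h
  have h1 : ∀ i ∈ Finset.univ, ∑ j, Complex.normSq (B j i) = 0 := by
    rw [← Finset.sum_eq_zero_iff_of_nonneg]
    · exact h
    · intro i _
      exact Finset.sum_nonneg fun j _ => Complex.normSq_nonneg _
  ext j i
  have h2 : ∀ jj ∈ Finset.univ, Complex.normSq (B jj i) = 0 := by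
    rw [← Finset.sum_eq_zero_iff_of_nonneg]
    · exact h1 i (Finset.mem_univ i)
    · intro jj _
      exact Complex.normSq_nonneg _
  simpa using Complex.normSq_eq_zero.mp (h2 j (Finset.mem_univ j))

lemma psd_trace_re_nonneg {P : Matrix (Fin d) (Fin d) ℂ} (hP : P.PosSemidef) :
    0 ≤ P.trace.re := by
  rw [← psqrt_mul_self hP]
  nth_rewrite 1 [← (psqrt_psd hP).1]
  exact trace_herm_sq_re_nonneg _

lemma psd_eq_zero_of_trace {P : Matrix (Fin d) (Fin d) ℂ} (hP : P.PosSemidef)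
    (h : P.trace.re = 0) : P = 0 := by
  rw [← psqrt_mul_self hP] at h ⊢
  nth_rewrite 1 [← (psqrt_psd hP).1] at h
  rw [eq_zero_of_trace_herm_sq _ h, mul_zero]

lemma trace_mul_psd_re_nonneg {P Q : Matrix (Fin d) (Fin d) ℂ} (hP : P.PosSemidef)
    (hQ : Q.PosSemidef) : 0 ≤ (P * Q).trace.re := by
  rw [← psqrt_mul_self hP, ← trace_mul_cycle (psqrt P) Q (psqrt P)]
  nth_rewrite 1 [← (psqrt_psd hP).1]
  exact psd_trace_re_nonneg (hQ.conjTranspose_mul_mul_same (psqrt P))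

lemma eps_limit {x y K : ℝ} (hK : 0 ≤ K)
    (h : ∀ ε : ℝ, 0 < ε → ε ≤ 1 → x ≤ y + K * Real.sqrt ε) : x ≤ y := by
  by_contra hc
  push_neg at hc
  set η := x - y with hη
  have hηpos : 0 < η := by simp [hη]; linarith
  set ε := min 1 ((η / (2 * (K + 1))) ^ 2) with hε
  have hd : 0 < η / (2 * (K + 1)) := by positivity
  have hεpos : 0 < ε := lt_min one_pos (by positivity)
  have hsq : Real.sqrt ε ≤ η / (2 * (K + 1)) := by
    calc Real.sqrt ε ≤ Real.sqrt ((η / (2 * (K + 1))) ^ 2) :=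
          Real.sqrt_le_sqrt (min_le_right _ _)
      _ = η / (2 * (K + 1)) := Real.sqrt_sq hd.le
  have h2 := h ε hεpos (min_le_left _ _)
  have h3 : K * Real.sqrt ε ≤ K * (η / (2 * (K + 1))) :=
    mul_le_mul_of_nonneg_left hsq hK
  have h4 : K * (η / (2 * (K + 1))) < η := by
    rw [mul_div_assoc'] at *
    rw [div_lt_iff₀ (by positivity)]
    nlinarith
  linarith

lemma cfc_mul_base (hA : A.IsHermitian) (f : ℝ → ℝ) :
    hA.cfc f * A = hA.cfc (fun x => f x * x) := by
  have h := cfc_mul hA f (fun x => x)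
  rw [cfc_id] at h
  exact h

lemma trace_re_eq_sum (hA : A.IsHermitian) : A.trace.re = ∑ i, hA.eigenvalues i := by
  have h := cfc_trace_re hA (fun x => x)
  rw [cfc_id] at h
  exact h


set_option maxHeartbeats 2000000 in
lemma master {M B : Matrix (Fin d) (Fin d) ℂ} (hM : M.PosSemidef)
    (hQ : (M - B * Bᴴ).PosSemidef) :
    2 * B.trace.re + (Real.sqrt (M.trace.re + 1))⁻¹ * (M - B * Bᴴ).trace.re
      ≤ 2 * (psqrt M).trace.re := by
  have hlam0 : ∀ i, 0 ≤ hM.1.eigenvalues i := hM.eigenvalues_nonneg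
  have htrM : M.trace.re = ∑ i, hM.1.eigenvalues i := trace_re_eq_sum hM.1
  have hpsqrt : (psqrt M).trace.re = ∑ i, Real.sqrt (hM.1.eigenvalues i) := by
    rw [psqrt_eq hM, cfc_trace_re]
  have hMtr0 : 0 ≤ M.trace.re := psd_trace_re_nonneg hM
  have hcpos : 0 < Real.sqrt (M.trace.re + 1) := Real.sqrt_pos.mpr (by linarith)
  set c : ℝ := (Real.sqrt (M.trace.re + 1))⁻¹ with hc
  refine eps_limit (K := 2 * d) (by positivity) fun ε hε hε1 => ?_
  set g3 : ℝ → ℝ := fun x => Real.sqrt (Real.sqrt (x + ε)) with hg3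
  set g4 : ℝ → ℝ := fun x => (Real.sqrt (Real.sqrt (x + ε)))⁻¹ with hg4
  have hpos : ∀ i, 0 < hM.1.eigenvalues i + ε := fun i => by have := hlam0 i; linarith
  have hg3pos : ∀ i, 0 < g3 (hM.1.eigenvalues i) := fun i =>
    Real.sqrt_pos.mpr (Real.sqrt_pos.mpr (hpos i))
  have hg34 : hM.1.cfc g3 * hM.1.cfc g4 = 1 := by
    rw [cfc_mul, cfc_congr hM.1 (g := fun _ => 1) fun i => mul_inv_cancel₀ (hg3pos i).ne',
      cfc_one]
  have hg43 : hM.1.cfc g4 * hM.1.cfc g3 = 1 := by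
    rw [cfc_mul, cfc_congr hM.1 (g := fun _ => 1) fun i => inv_mul_cancel₀ (hg3pos i).ne',
      cfc_one]
  have hg44 : ∀ i, g4 (hM.1.eigenvalues i) * g4 (hM.1.eigenvalues i)
      = (Real.sqrt (hM.1.eigenvalues i + ε))⁻¹ := fun i => by
    rw [hg4, ← mul_inv, Real.mul_self_sqrt (Real.sqrt_nonneg _)]
  have hT1 : (hM.1.cfc g3 * hM.1.cfc g3).trace.re = ∑ i, Real.sqrt (hM.1.eigenvalues i + ε) := by
    rw [cfc_mul, cfc_trace_re]
    exact Finset.sum_congr rfl fun i _ => Real.mul_self_sqrt (Real.sqrt_nonneg _)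
  -- expansion of the square
  set C : Matrix (Fin d) (Fin d) ℂ := hM.1.cfc g3 - hM.1.cfc g4 * B with hC
  have hCH : Cᴴ = hM.1.cfc g3 - Bᴴ * hM.1.cfc g4 := by
    rw [hC, conjTranspose_sub, conjTranspose_mul, cfc_conjTranspose hM.1 g4, cfc_conjTranspose hM.1 g3]
  have hexp : Cᴴ * C = hM.1.cfc g3 * hM.1.cfc g3 - B - Bᴴ
      + Bᴴ * (hM.1.cfc g4 * hM.1.cfc g4) * B := by
    rw [hCH, hC, sub_mul, mul_sub, mul_sub, ← mul_assoc (hM.1.cfc g3) (hM.1.cfc g4) B,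
      hg34, one_mul, mul_assoc Bᴴ (hM.1.cfc g4) (hM.1.cfc g3), hg43, mul_one]
    noncomm_ring
  have h0 : 0 ≤ (Cᴴ * C).trace.re := trace_herm_sq_re_nonneg C
  have htr4 : (Bᴴ * (hM.1.cfc g4 * hM.1.cfc g4) * B).trace
      = ((hM.1.cfc g4 * hM.1.cfc g4) * (B * Bᴴ)).trace := by
    rw [trace_mul_cycle Bᴴ (hM.1.cfc g4 * hM.1.cfc g4) B]
    exact trace_mul_comm (B * Bᴴ) (hM.1.cfc g4 * hM.1.cfc g4)
  have hBBH : B * Bᴴ = M - (M - B * Bᴴ) := (sub_sub_cancel M (B * Bᴴ)).symm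
  have htrexp : (Cᴴ * C).trace.re = (∑ i, Real.sqrt (hM.1.eigenvalues i + ε))
      - 2 * B.trace.re
      + ((hM.1.cfc g4 * hM.1.cfc g4) * (B * Bᴴ)).trace.re := by
    rw [hexp, trace_add, trace_sub, trace_sub, htr4, trace_conjTranspose]
    simp only [Complex.add_re, Complex.sub_re, RCLike.star_def, Complex.conj_re, hT1]
    ring
  have hsplit : ((hM.1.cfc g4 * hM.1.cfc g4) * (B * Bᴴ)).trace.re
      = ((hM.1.cfc g4 * hM.1.cfc g4) * M).trace.re
        - ((hM.1.cfc g4 * hM.1.cfc g4) * (M - B * Bᴴ)).trace.re := by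
    have e : (hM.1.cfc g4 * hM.1.cfc g4) * (B * Bᴴ)
        = (hM.1.cfc g4 * hM.1.cfc g4) * M
          - (hM.1.cfc g4 * hM.1.cfc g4) * (M - B * Bᴴ) := by
      rw [← mul_sub, sub_sub_cancel]
    rw [e, trace_sub, Complex.sub_re]
  have hT2 : ((hM.1.cfc g4 * hM.1.cfc g4) * M).trace.re
      ≤ ∑ i, Real.sqrt (hM.1.eigenvalues i + ε) := by
    rw [cfc_mul, cfc_mul_base, cfc_trace_re]
    refine Finset.sum_le_sum fun i _ => ?_
    rw [hg44 i, inv_mul_le_iff₀ (Real.sqrt_pos.mpr (hpos i)),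
      Real.mul_self_sqrt (hpos i).le]
    linarith [hlam0 i, hε.le]
  have hT3 : c * (M - B * Bᴴ).trace.re
      ≤ ((hM.1.cfc g4 * hM.1.cfc g4) * (M - B * Bᴴ)).trace.re := by
    have hsub : hM.1.cfc g4 * hM.1.cfc g4 - (c : ℂ) • 1
        = hM.1.cfc (fun x => g4 x * g4 x - c) := by
      rw [cfc_mul, ← cfc_const hM.1 c, cfc_sub]
    have hpsd : (hM.1.cfc (fun x => g4 x * g4 x - c)).PosSemidef := by
      refine cfc_posSemidef hM.1 fun i => ?_
      rw [hg44 i, sub_nonneg, hc]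
      refine inv_anti₀ (Real.sqrt_pos.mpr (hpos i)) (Real.sqrt_le_sqrt ?_)
      have : hM.1.eigenvalues i ≤ M.trace.re := by
        rw [htrM]
        exact Finset.single_le_sum (fun j _ => hlam0 j) (Finset.mem_univ i)
      linarith
    have h5 : 0 ≤ ((hM.1.cfc g4 * hM.1.cfc g4 - (c : ℂ) • 1) * (M - B * Bᴴ)).trace.re := by
      rw [hsub]
      exact trace_mul_psd_re_nonneg hpsd hQ
    rw [sub_mul, smul_mul_assoc, one_mul, trace_sub, trace_smul, Complex.sub_re,
      smul_eq_mul, Complex.mul_re, Complex.ofReal_re, Complex.ofReal_im, zero_mul,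
      sub_zero] at h5
    linarith
  have hsum : ∑ i, Real.sqrt (hM.1.eigenvalues i + ε)
      ≤ (∑ i, Real.sqrt (hM.1.eigenvalues i)) + d * Real.sqrt ε := by
    have : ∀ i ∈ Finset.univ, Real.sqrt (hM.1.eigenvalues i + ε)
        ≤ Real.sqrt (hM.1.eigenvalues i) + Real.sqrt ε := by
      intro i _
      have h1 : hM.1.eigenvalues i + ε
          ≤ (Real.sqrt (hM.1.eigenvalues i) + Real.sqrt ε) ^ 2 := by
        nlinarith [Real.sq_sqrt (hlam0 i), Real.sq_sqrt hε.le,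
          mul_nonneg (Real.sqrt_nonneg (hM.1.eigenvalues i)) (Real.sqrt_nonneg ε)]
      calc Real.sqrt (hM.1.eigenvalues i + ε)
          ≤ Real.sqrt ((Real.sqrt (hM.1.eigenvalues i) + Real.sqrt ε) ^ 2) :=
            Real.sqrt_le_sqrt h1
        _ = Real.sqrt (hM.1.eigenvalues i) + Real.sqrt ε :=
            Real.sqrt_sq (by positivity)
    calc ∑ i, Real.sqrt (hM.1.eigenvalues i + ε)
        ≤ ∑ i, (Real.sqrt (hM.1.eigenvalues i) + Real.sqrt ε) := Finset.sum_le_sum this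
      _ = (∑ i, Real.sqrt (hM.1.eigenvalues i)) + d * Real.sqrt ε := by
          rw [Finset.sum_add_distrib, Finset.sum_const, Finset.card_univ, Fintype.card_fin,
            nsmul_eq_mul]
  rw [hpsqrt]
  rw [htrexp] at h0
  linarith


lemma psd_smul {P : Matrix (Fin d) (Fin d) ℂ} (hP : P.PosSemidef) {c : ℝ} (hc : 0 ≤ c) :
    ((c : ℂ) • P).PosSemidef := by
  constructor
  · show ((c : ℂ) • P)ᴴ = (c : ℂ) • P
    rw [conjTranspose_smul, hP.1, RCLike.star_def, Complex.conj_ofReal]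
  · intro x
    exact (hP.smul (Complex.zero_le_real.mpr hc)).2 x

lemma mconj_of_hermitian (hA : A.IsHermitian) : mconj A = Aᵀ := by
  ext i j
  show (starRingEnd ℂ) (A i j) = A j i
  calc (starRingEnd ℂ) (A i j) = Aᴴ j i := (Matrix.conjTranspose_apply A i j).symm
    _ = A j i := by rw [hA]

end MyCfc

open MyCfc

theorem stmt10 (d : ℕ) (ρ : Matrix (Fin d) (Fin d) ℂ) (hρ : IsDensityMatrix ρ) :
    MRe ρ ≤ (1/2) * MT ρ ∧ (MRe ρ = (1/2) * MT ρ ↔ ρ = mconj ρ) := by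
  obtain ⟨hpsd, htr⟩ := hρ
  have hmconj : mconj ρ = ρᵀ := mconj_of_hermitian hpsd.1
  have hconjpsd : (mconj ρ).PosSemidef := hmconj ▸ hpsd.transpose
  have hconjtr : (mconj ρ).trace = 1 := by rw [hmconj, trace_transpose, htr]
  have hX : (psqrt ρ).PosSemidef := by
    exact psqrt_psd hpsd
  have hXX : psqrt ρ * psqrt ρ = ρ := by
    exact psqrt_mul_self hpsd
  have hY : (psqrt (mconj ρ)).PosSemidef := by
    exact psqrt_psd hconjpsd
  have hYY : psqrt (mconj ρ) * psqrt (mconj ρ) = mconj ρ := by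
    exact psqrt_mul_self hconjpsd
  have hre : (reState ρ).PosSemidef := by
    rw [reState, show ((1:ℂ)/2) = (((1/2 : ℝ) : ℂ)) by norm_num]
    exact psd_smul (hpsd.add hconjpsd) (by norm_num)
  have hM : (psqrt ρ * reState ρ * psqrt ρ).PosSemidef := by
    have h := hre.conjTranspose_mul_mul_same (psqrt ρ)
    rwa [hX.1] at h
  have hXmX : (psqrt ρ * mconj ρ * psqrt ρ).PosSemidef := by
    have h := hconjpsd.conjTranspose_mul_mul_same (psqrt ρ)
    rwa [hX.1] at h
  have hR : (psqrt (psqrt ρ * mconj ρ * psqrt ρ)).PosSemidef := by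
    exact psqrt_psd hXmX
  have hRR : psqrt (psqrt ρ * mconj ρ * psqrt ρ) * psqrt (psqrt ρ * mconj ρ * psqrt ρ)
      = psqrt ρ * mconj ρ * psqrt ρ := by
    exact psqrt_mul_self hXmX
  have hXρX : psqrt ρ * ρ * psqrt ρ = ρ * ρ := by
    calc psqrt ρ * ρ * psqrt ρ
        = psqrt ρ * (psqrt ρ * psqrt ρ) * psqrt ρ := by rw [hXX]
      _ = (psqrt ρ * psqrt ρ) * (psqrt ρ * psqrt ρ) := by noncomm_ring
      _ = ρ * ρ := by rw [hXX]
  set R := psqrt (psqrt ρ * mconj ρ * psqrt ρ) with hRdef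
  -- decomposition of M
  have hMeq : psqrt ρ * reState ρ * psqrt ρ
      = ((1:ℂ)/2) • (ρ * ρ + R * R) := by
    rw [reState, mul_smul_comm, smul_mul_assoc, mul_add, add_mul, hXρX, ← hRR]
  have hSpsd : (((1:ℂ)/2) • (ρ + R)).PosSemidef := by
    rw [show ((1:ℂ)/2) = (((1/2:ℝ)):ℂ) by norm_num]
    exact psd_smul (hpsd.add hR) (by norm_num)
  have hQeq : psqrt ρ * reState ρ * psqrt ρ
      - ((1:ℂ)/2) • (ρ + R) * (((1:ℂ)/2) • (ρ + R))ᴴ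
      = (((1/4:ℝ)):ℂ) • ((ρ - R)ᴴ * (ρ - R)) := by
    have e1 : (ρ + R) * (ρ + R) = ρ*ρ + ρ*R + R*ρ + R*R := by noncomm_ring
    have e2 : (ρ - R) * (ρ - R) = ρ*ρ - ρ*R - R*ρ + R*R := by noncomm_ring
    rw [hSpsd.1, hMeq, smul_mul_smul_comm, e1, conjTranspose_sub, hpsd.1, hR.1, e2,
      show (((1/4:ℝ)):ℂ) = (1:ℂ)/2 * ((1:ℂ)/2) by norm_num]
    module
  have hQpsd : (psqrt ρ * reState ρ * psqrt ρ
      - ((1:ℂ)/2) • (ρ + R) * (((1:ℂ)/2) • (ρ + R))ᴴ).PosSemidef := by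
    rw [hQeq]
    exact psd_smul (posSemidef_conjTranspose_mul_self _) (by norm_num)
  have key1 := master hM hQpsd
  have hMtr_re : 0 ≤ (psqrt ρ * reState ρ * psqrt ρ).trace.re := psd_trace_re_nonneg hM
  have hc1pos : 0 < (Real.sqrt ((psqrt ρ * reState ρ * psqrt ρ).trace.re + 1))⁻¹ :=
    inv_pos.mpr (Real.sqrt_pos.mpr (by linarith))
  have hQtr : 0 ≤ (psqrt ρ * reState ρ * psqrt ρ
      - ((1:ℂ)/2) • (ρ + R) * (((1:ℂ)/2) • (ρ + R))ᴴ).trace.re := psd_trace_re_nonneg hQpsd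
  have hStr : (((1:ℂ)/2) • (ρ + R)).trace.re = (1 + R.trace.re) / 2 := by
    rw [show ((1:ℂ)/2) = (((1/2:ℝ)):ℂ) by norm_num, trace_smul, trace_add, htr, smul_eq_mul,
      Complex.mul_re, Complex.ofReal_re, Complex.ofReal_im, zero_mul, sub_zero,
      Complex.add_re, Complex.one_re]
    ring
  have hZZ : (psqrt ρ * psqrt (mconj ρ)) * (psqrt ρ * psqrt (mconj ρ))ᴴ
      = psqrt ρ * mconj ρ * psqrt ρ := by
    rw [conjTranspose_mul, hX.1, hY.1]
    calc psqrt ρ * psqrt (mconj ρ) * (psqrt (mconj ρ) * psqrt ρ)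
        = psqrt ρ * (psqrt (mconj ρ) * psqrt (mconj ρ)) * psqrt ρ := by noncomm_ring
      _ = psqrt ρ * mconj ρ * psqrt ρ := by rw [hYY]
  have hZQ : ((psqrt ρ * mconj ρ * psqrt ρ)
      - (psqrt ρ * psqrt (mconj ρ)) * (psqrt ρ * psqrt (mconj ρ))ᴴ).PosSemidef := by
    rw [hZZ, sub_self]
    exact Matrix.PosSemidef.zero
  have key2 := master hXmX hZQ
  rw [hZZ, sub_self] at key2
  have key2' : (psqrt ρ * psqrt (mconj ρ)).trace.re ≤ R.trace.re := by
    rw [Matrix.trace_zero] at key2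
    simp only [Complex.zero_re, mul_zero, add_zero] at key2
    linarith
  have hfid : fidelity ρ (reState ρ) = (psqrt (psqrt ρ * reState ρ * psqrt ρ)).trace.re := rfl
  have haff : affinity ρ (mconj ρ) = (psqrt ρ * psqrt (mconj ρ)).trace.re := rfl
  have hMRe : MRe ρ = 1 - fidelity ρ (reState ρ) := rfl
  have hMT : MT ρ = 1 - affinity ρ (mconj ρ) := rfl
  have chain1 : (1 + R.trace.re)/2 ≤ fidelity ρ (reState ρ) := by
    rw [hStr] at key1
    rw [hfid]
    nlinarith [mul_nonneg hc1pos.le hQtr]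
  have chain2 : affinity ρ (mconj ρ) ≤ R.trace.re := by
    rw [haff]
    exact key2'
  refine ⟨by rw [hMRe, hMT]; linarith, ?_, ?_⟩
  · intro heq
    rw [hMRe, hMT] at heq
    have hfidval : fidelity ρ (reState ρ) = (1 + affinity ρ (mconj ρ))/2 := by linarith
    have hRtr_aff : R.trace.re = affinity ρ (mconj ρ) := by linarith
    have hc1Q : (Real.sqrt ((psqrt ρ * reState ρ * psqrt ρ).trace.re + 1))⁻¹
        * (psqrt ρ * reState ρ * psqrt ρ
          - ((1:ℂ)/2) • (ρ + R) * (((1:ℂ)/2) • (ρ + R))ᴴ).trace.re ≤ 0 := by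
      rw [hStr] at key1
      rw [hfid] at hfidval
      linarith
    have hQzero : (psqrt ρ * reState ρ * psqrt ρ
        - ((1:ℂ)/2) • (ρ + R) * (((1:ℂ)/2) • (ρ + R))ᴴ).trace.re = 0 := by
      nlinarith
    have hQmat := psd_eq_zero_of_trace hQpsd hQzero
    rw [hQeq] at hQmat
    have hzero2 : (ρ - R)ᴴ * (ρ - R) = 0 := by
      rcases smul_eq_zero.mp hQmat with h | h
      · exact absurd h (by norm_num)
      · exact h
    have hρR : ρ - R = 0 := by
      refine eq_zero_of_trace_herm_sq _ ?_
      rw [hzero2, Matrix.trace_zero, Complex.zero_re]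
    have hρeqR : ρ = R := sub_eq_zero.mp hρR
    have haff1 : (psqrt ρ * psqrt (mconj ρ)).trace.re = 1 := by
      rw [← haff, ← hRtr_aff, ← hρeqR, htr, Complex.one_re]
    have hdiff : ((psqrt ρ - psqrt (mconj ρ))ᴴ * (psqrt ρ - psqrt (mconj ρ))).trace.re = 0 := by
      rw [conjTranspose_sub, hX.1, hY.1, sub_mul, mul_sub, mul_sub, hXX, hYY,
        trace_sub, trace_sub, trace_sub, trace_mul_comm (psqrt (mconj ρ)) (psqrt ρ),
        htr, hconjtr]
      simp only [Complex.sub_re, Complex.one_re]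
      linarith [haff1]
    have hXY := eq_zero_of_trace_herm_sq _ hdiff
    have hXeqY : psqrt ρ = psqrt (mconj ρ) := sub_eq_zero.mp hXY
    calc ρ = psqrt ρ * psqrt ρ := hXX.symm
      _ = psqrt (mconj ρ) * psqrt (mconj ρ) := by rw [hXeqY]
      _ = mconj ρ := hYY
  · intro h
    have hrest : reState ρ = ρ := by
      rw [reState, ← h, ← two_smul ℂ ρ, smul_smul]
      norm_num
    have haff1 : affinity ρ (mconj ρ) = 1 := by
      rw [haff, ← h, hXX, htr, Complex.one_re]
    have hsq : (ρ * ρ).PosSemidef := by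
      nth_rewrite 1 [← hpsd.1]
      exact posSemidef_conjTranspose_mul_self ρ
    have hpsq : psqrt (ρ * ρ) = ρ := by
      exact psqrt_of_mul_self hpsd hsq
    have hfid1 : fidelity ρ (reState ρ) = 1 := by
      rw [hfid, hrest, hXρX, hpsq, htr, Complex.one_re]
    rw [hMRe, hMT, hfid1, haff1]
    norm_num
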